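/- Let v be a henselian valuation on a field K with residue field Kv of characteristic different from 2. Then s(K) = s(Kv). -/

import Mathlib

/-- `a` is a sum of `n` squares in `R`. -/
def IsSumSqN {R : Type*} [CommRing R] (n : ℕ) (a : R) : Prop :=
  ∃ x : Fin n → R, a = ∑ i, x i ^ 2

/-- `a` is a sum of squares in `R`. -/
def IsSOS {R : Type*} [CommRing R] (a : R) : Prop := ∃ n, IsSumSqN n a

/-- The level `s(R)`. -/
noncomputable def levelN (R : Type*) [CommRing R] : ℕ∞ :=
  sInf {n : ℕ∞ | ∃ m : ℕ, (m : ℕ∞) = n ∧ IsSumSqN m (-1 : R)}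

/-- The Pythagoras number `p(R)`. -/
noncomputable def pythNum (R : Type*) [CommRing R] : ℕ∞ :=
  sInf {n : ℕ∞ | ∃ m : ℕ, (m : ℕ∞) = n ∧ ∀ a : R, IsSOS a → IsSumSqN m a}

open Classical in
/-- The modified Pythagoras number `p'(R)`. -/
noncomputable def pythNum' (R : Type*) [CommRing R] : ℕ∞ :=
  if ¬ IsSOS (-1 : R) ∨ ringChar R = 2 then pythNum R else levelN R + 1

open IsLocalRing in
private lemma isSumSqN_neg_one_iff_residue {K : Type*} [Field K] {Γ₀ : Type*}
    [LinearOrderedCommGroupWithZero Γ₀] (v : Valuation K Γ₀)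
    [HenselianLocalRing v.valuationSubring]
    (h2 : ringChar (ResidueField v.valuationSubring) ≠ 2) (m : ℕ) :
    IsSumSqN m (-1 : K) ↔ IsSumSqN m (-1 : ResidueField v.valuationSubring) := by
  set A := v.valuationSubring with hA
  set r := residue A with hr
  have h2' : (2 : ResidueField A) ≠ 0 := by
    intro h
    rcases (Nat.prime_two.eq_one_or_self_of_dvd (ringChar (ResidueField A))
        ((ringChar.spec _ 2).mp (by exact_mod_cast h))) with h1 | h1
    · have := (ringChar.spec (ResidueField A) 1).mpr (by rw [h1])
      simp at this
    · exact h2 h1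
  constructor
  · rintro ⟨x, hx⟩
    have hm : (Finset.univ : Finset (Fin m)).Nonempty := by
      rcases Nat.eq_zero_or_pos m with h | h
      · subst h; simp at hx
      · exact ⟨⟨0, h⟩, Finset.mem_univ _⟩
    obtain ⟨j, -, hj⟩ := Finset.exists_max_image Finset.univ (fun i => v (x i)) hm
    by_cases hle : v (x j) ≤ 1
    · -- all coefficients integral
      set x' : Fin m → A := fun i => ⟨x i, (hj i (Finset.mem_univ i)).trans hle⟩ with hx'
      have h' : (-1 : A) = ∑ i, x' i ^ 2 := by
        apply Subtype.ext
        push_cast [hx']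
        exact hx
      refine ⟨fun i => r (x' i), ?_⟩
      have := congrArg r h'
      simpa only [map_neg, map_one, map_sum, map_pow] using this
    · push_neg at hle
      have hj0 : x j ≠ 0 := by
        intro h0; rw [h0, map_zero] at hle; exact absurd hle (by simp)
      set u : Fin m → A := fun i => ⟨x i / x j, by
        rw [Valuation.mem_valuationSubring_iff, map_div₀]
        exact (div_le_one₀ (zero_lt_one.trans hle)).mpr (hj i (Finset.mem_univ i))⟩ with hu
      have hsum : ((∑ i, u i ^ 2 : A) : K) = -1 / (x j) ^ 2 := by
        push_cast [hu]
        simp only [div_pow]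
        rw [← Finset.sum_div, ← hx]
      have hmem : (∑ i, u i ^ 2 : A) ∈ maximalIdeal A := by
        rw [ValuationSubring.valuation_lt_one_iff]
        apply (v.isEquiv_valuation_valuationSubring.lt_one_iff_lt_one).mp
        rw [hsum, map_div₀, v.map_neg, v.map_one, map_pow, one_div]
        have h1 : 1 < v (x j) ^ 2 := one_lt_pow₀ hle (by norm_num)
        exact (inv_lt_one₀ (zero_lt_one.trans h1)).mpr h1
      set y : Fin m → ResidueField A := fun i => r (u i) with hy
      have hy0 : ∑ i, y i ^ 2 = 0 := by
        have := (residue_eq_zero_iff _).mpr hmem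
        rw [map_sum] at this
        simpa only [map_pow] using this
      have hyj : y j = 1 := by
        have : u j = 1 := Subtype.ext (by simp [hu, div_self hj0])
        rw [hy]; simp [this]
      refine ⟨Function.update y j 0, ?_⟩
      have hfun : (fun i => Function.update y j 0 i ^ 2) =
          Function.update (fun i => y i ^ 2) j 0 := by
        funext i
        by_cases h : i = j <;> simp [h, Function.update]
      calc (-1 : ResidueField A) = 0 + (∑ i, y i ^ 2 - y j ^ 2) := by
            rw [hy0, hyj]; ring
      _ = 0 + ∑ i ∈ Finset.univ \ {j}, y i ^ 2 := by
            rw [Finset.sum_eq_sum_sdiff_singleton_add (Finset.mem_univ j) (fun i => y i ^ 2)]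
            ring
      _ = ∑ i, Function.update (fun i => y i ^ 2) j 0 i :=
            (Finset.sum_update_of_mem (Finset.mem_univ j) _ _).symm
      _ = ∑ i, Function.update y j 0 i ^ 2 := by rw [← hfun]
  · rintro ⟨y, hy⟩
    choose x hxy using fun i => residue_surjective (R := A) (y i)
    set a : A := -(∑ i, x i ^ 2) with ha
    have hra : r a = 1 := by
      rw [ha, map_neg, map_sum]
      simp only [map_pow, hr, hxy]
      rw [← hy]; ring
    have ha0 : a ≠ 0 := by
      intro h; rw [h, map_zero] at hra; exact zero_ne_one hra
    -- Hensel's lemma for X^2 - C a at 1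
    obtain ⟨b, hb, -⟩ := HenselianLocalRing.is_henselian (R := A)
      (Polynomial.X ^ 2 - Polynomial.C a) (Polynomial.monic_X_pow_sub_C a two_ne_zero) 1
      (by
        rw [← residue_eq_zero_iff]
        simp [show residue A a = 1 from hra])
      (by
        have : (Polynomial.derivative (Polynomial.X ^ 2 - Polynomial.C a)).eval 1 = 2 := by
          simp; exact one_add_one_eq_two
        rw [this]
        by_contra hun
        have : (2 : A) ∈ maximalIdeal A := hun
        have := (residue_eq_zero_iff _).mpr this
        rw [map_ofNat] at this
        exact h2' this)
    have hb2 : b ^ 2 = a := by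
      have := hb
      simp only [Polynomial.IsRoot, Polynomial.eval_sub, Polynomial.eval_pow,
        Polynomial.eval_X, Polynomial.eval_C, sub_eq_zero] at this
      exact this
    have hbK : (b : K) ≠ 0 := by
      intro h
      apply ha0
      rw [← hb2]
      have : b = 0 := Subtype.ext (by exact_mod_cast h)
      rw [this]; ring
    refine ⟨fun i => (x i : K) / (b : K), ?_⟩
    have haK : (∑ i, ((x i : K)) ^ 2) = -((a : K)) := by
      push_cast [ha]; ring
    have hbK2 : ((b : K)) ^ 2 = (a : K) := by exact_mod_cast congrArg (Subtype.val) hb2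
    calc (-1 : K) = -((a:K)) / (a:K) := by
          rw [neg_div, div_self (by exact_mod_cast ha0)]
    _ = (∑ i, ((x i : K)) ^ 2) / ((b : K)) ^ 2 := by rw [haK, hbK2]
    _ = ∑ i, ((x i : K) / (b : K)) ^ 2 := by
          rw [Finset.sum_div]
          simp [div_pow]

/-- For a henselian valuation with residue characteristic not 2, `s(K) = s(Kv)`. -/
theorem level_eq_level_residue_of_henselian {K : Type*} [Field K] {Γ₀ : Type*}
    [LinearOrderedCommGroupWithZero Γ₀] (v : Valuation K Γ₀)
    [HenselianLocalRing v.valuationSubring]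
    (h2 : ringChar (IsLocalRing.ResidueField v.valuationSubring) ≠ 2) :
    levelN K = levelN (IsLocalRing.ResidueField v.valuationSubring) := by
  unfold levelN
  congr 1
  ext n
  simp only [Set.mem_setOf_eq]
  constructor
  · rintro ⟨m, rfl, hm⟩
    exact ⟨m, rfl, (isSumSqN_neg_one_iff_residue v h2 m).mp hm⟩
  · rintro ⟨m, rfl, hm⟩
    exact ⟨m, rfl, (isSumSqN_neg_one_iff_residue v h2 m).mpr hm⟩
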